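/- Let s ∈ ℂ and let W, M, D, K be N×N complex matrices, F an N×m complex matrix, G a p×N complex matrix. Define the block matrices E = fromBlocks W 0 0 M, A = fromBlocks 0 W (−K) (−D) (both 2N×2N), B = fromBlocks-column (0; F) (2N×m), and C = fromBlocks-row (G, 0) (p×2N). If W is invertible and the polynomial matrix P(s) = s²·M + s·D + K is invertible, then s·E − A is invertible and C · (s·E − A)⁻¹ · B = G · P(s)⁻¹ · F. -/

import Mathlib

open Matrix

/-- Transfer function of the linearization equals the transfer function
`G P(s)⁻¹ F` of the second-order system. -/
theorem stmt_0 (N m p : ℕ) (s : ℂ)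
    (W M D K : Matrix (Fin N) (Fin N) ℂ)
    (F : Matrix (Fin N) (Fin m) ℂ) (G : Matrix (Fin p) (Fin N) ℂ)
    (hW : IsUnit W) (hP : IsUnit (s ^ 2 • M + s • D + K)) :
    IsUnit (s • fromBlocks W 0 0 M - fromBlocks 0 W (-K) (-D)) ∧
      fromCols G (0 : Matrix (Fin p) (Fin N) ℂ) *
          (s • fromBlocks W 0 0 M - fromBlocks 0 W (-K) (-D))⁻¹ *
          fromRows (0 : Matrix (Fin N) (Fin m) ℂ) F
        = G * (s ^ 2 • M + s • D + K)⁻¹ * F := by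
  set P : Matrix (Fin N) (Fin N) ℂ := s ^ 2 • M + s • D + K with hPdef
  have hWd : IsUnit W.det := (Matrix.isUnit_iff_isUnit_det W).mp hW
  have hPd : IsUnit P.det := (Matrix.isUnit_iff_isUnit_det P).mp hP
  have hWW : W * W⁻¹ = 1 := Matrix.mul_nonsing_inv W hWd
  have hPP : P * P⁻¹ = 1 := Matrix.mul_nonsing_inv P hPd
  set Q : Matrix (Fin N) (Fin N) ℂ := s • M + D with hQdef
  have hKQ : K * P⁻¹ + s • (Q * P⁻¹) = 1 := by
    rw [← Matrix.smul_mul, ← Matrix.add_mul]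
    have : K + s • Q = P := by
      rw [hQdef, hPdef, smul_add, smul_smul, ← sq]; ring_nf; abel
    rw [this, hPP]
  set Z : Matrix (Fin N ⊕ Fin N) (Fin N ⊕ Fin N) ℂ :=
    fromBlocks (P⁻¹ * Q * W⁻¹) P⁻¹ (s • (P⁻¹ * Q * W⁻¹) - W⁻¹) (s • P⁻¹) with hZdef
  have hX : s • fromBlocks W 0 0 M - fromBlocks 0 W (-K) (-D)
      = fromBlocks (s • W) (-W) K Q := by
    rw [Matrix.fromBlocks_smul, sub_eq_add_neg, Matrix.fromBlocks_neg,
      Matrix.fromBlocks_add, Matrix.fromBlocks_inj]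
    refine ⟨by simp, by simp, by simp, by simp [hQdef]⟩
  have hXZ : (s • fromBlocks W 0 0 M - fromBlocks 0 W (-K) (-D)) * Z = 1 := by
    rw [hX, hZdef, Matrix.fromBlocks_multiply, ← Matrix.fromBlocks_one,
      Matrix.fromBlocks_inj]
    refine ⟨?_, ?_, ?_, ?_⟩
    · simp [Matrix.smul_mul, Matrix.mul_smul, Matrix.mul_sub, mul_assoc, hWW]
    · simp [Matrix.smul_mul, Matrix.mul_smul]
    · simp only [Matrix.mul_sub, Matrix.mul_smul, smul_sub]
      have : K * (P⁻¹ * Q * W⁻¹) + s • (Q * (P⁻¹ * Q * W⁻¹)) - Q * W⁻¹ = 0 := by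
        have := congrArg (fun X => X * (Q * W⁻¹)) hKQ
        simp only [Matrix.add_mul, Matrix.smul_mul, Matrix.one_mul, mul_assoc] at this ⊢
        rw [this]; abel
      rw [← this]; abel
    · have := congrArg (fun X => X * 1) hKQ
      simp only [Matrix.mul_smul, ← mul_assoc]
      rw [hKQ]
  have hU : IsUnit (s • fromBlocks W 0 0 M - fromBlocks 0 W (-K) (-D)) := by
    exact (Matrix.isUnit_iff_isUnit_det _).mpr (Matrix.isUnit_det_of_right_inverse hXZ)
  refine ⟨hU, ?_⟩
  rw [Matrix.inv_eq_right_inv hXZ, hZdef,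
    Matrix.fromCols_mul_fromBlocks, Matrix.fromCols_mul_fromRows]
  simp [mul_assoc]
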